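/- For all integers 1 ≤ d ≤ e ≤ n−1 and all y_1,…,y_n > 0, F_{d,e}(Y(y)) · F_{d,e}(y) = 1, where Y is the middle-circle transformation defined in the context. (This expresses that applying τ twice returns each generic outer-circle y-variable, whose transformation under τ is multiplication by the factor F_{d_i,e_i}(y), to its original value.) -/

import Mathlib

noncomputable section

/-- The convention `y_0 := 1`. -/
def Yc (y : ℕ → ℝ) : ℕ → ℝ := fun k => if k = 0 then 1 else y k

/-- The rational map `Y = (Y_1, …, Y_n)` on positive tuples `(y_1, …, y_n)` (with `y_0 := 1`),
given by the paper's formulas for the effect of `τ` on the middle-circle `y`-variables of a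
spider web quiver. -/
def Ymap (n : ℕ) (y : ℕ → ℝ) : ℕ → ℝ := fun i =>
  if i = n then
    (1 + Yc y n * ∑ j ∈ Finset.range (n - 1), ∏ k ∈ Finset.range (j + 1), Yc y k) /
      (∑ j ∈ Finset.Icc 1 (n - 1), ∏ k ∈ Finset.Icc 1 j, Yc y k +
        ∏ k ∈ Finset.Icc 1 n, Yc y k)
  else
    (∑ j ∈ Finset.Icc i n, ∏ k ∈ Finset.Ico i j, Yc y k +
        (∏ k ∈ Finset.Icc i n, Yc y k) *
          ∑ j ∈ Finset.range (i - 1), ∏ k ∈ Finset.range (j + 1), Yc y k) /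
      (∑ j ∈ Finset.Icc (i + 1) (n - 1), ∏ k ∈ Finset.Icc (i + 1) j, Yc y k +
        (∏ k ∈ Finset.Icc (i + 1) n, Yc y k) *
          ∑ j ∈ Finset.range (i + 1), ∏ k ∈ Finset.range (j + 1), Yc y k)

/-- For `1 ≤ d ≤ e ≤ n−1`, the multiplier
`F_{d,e}(y) = [Σ_{j=e}^{n−1} ∏_{k=d+1}^{j} y_k + (∏_{k=d+1}^{n} y_k)(Σ_{j=0}^{e−1} ∏_{k=0}^{j} y_k)] /
             [Σ_{j=d+1}^{n} ∏_{k=d+1}^{j−1} y_k + (∏_{k=d+1}^{n} y_k)(Σ_{j=0}^{d−1} ∏_{k=0}^{j} y_k)]`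
describing the transformation under `τ` of a generic outer-circle `y`-variable of a spider
web quiver. -/
def Fde (n d e : ℕ) (y : ℕ → ℝ) : ℝ :=
  (∑ j ∈ Finset.Icc e (n - 1), ∏ k ∈ Finset.Icc (d + 1) j, Yc y k +
      (∏ k ∈ Finset.Icc (d + 1) n, Yc y k) *
        ∑ j ∈ Finset.range e, ∏ k ∈ Finset.range (j + 1), Yc y k) /
    (∑ j ∈ Finset.Icc (d + 1) n, ∏ k ∈ Finset.Ico (d + 1) j, Yc y k +
      (∏ k ∈ Finset.Icc (d + 1) n, Yc y k) *
        ∑ j ∈ Finset.range d, ∏ k ∈ Finset.range (j + 1), Yc y k)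

namespace SW

open Finset

variable (n : ℕ) (y : ℕ → ℝ)

/-- `A y i = Σ_{j=0}^{i-1} ∏_{k=0}^{j} y_k`. -/
def A (i : ℕ) : ℝ := ∑ j ∈ range i, ∏ k ∈ range (j + 1), Yc y k

/-- `P y a b = ∏_{k=a}^{b} y_k`. -/
def P (a b : ℕ) : ℝ := ∏ k ∈ Icc a b, Yc y k

/-- `L i`. -/
def L (i : ℕ) : ℝ :=
  ∑ j ∈ Icc i n, ∏ k ∈ Ico i j, Yc y k + P y i n * A y (i - 1)

lemma Yc_zero : Yc y 0 = 1 := rfl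

lemma Yc_of_pos {k : ℕ} (hk : 1 ≤ k) : Yc y k = y k := by
  simp [Yc]; omega

lemma prod_range_eq (z : ℕ → ℝ) (m : ℕ) :
    ∏ k ∈ range (m + 1), Yc z k = P z 1 m := by
  induction m with
  | zero => simp [P, Yc]
  | succ m ih =>
      rw [Finset.prod_range_succ, ih, P, P, Finset.prod_Icc_succ_top (by omega)]

lemma A_succ (z : ℕ → ℝ) (i : ℕ) : A z (i + 1) = A z i + P z 1 i := by
  rw [A, A, Finset.sum_range_succ, prod_range_eq]

lemma A_zero (z : ℕ → ℝ) : A z 0 = 0 := by simp [A]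

lemma A_one (z : ℕ → ℝ) : A z 1 = 1 := by
  simp [A, Yc]

lemma sum_shift (f : ℕ → ℝ) (m b : ℕ) :
    ∑ j ∈ Icc (m + 1) (b + 1), f j = ∑ j ∈ Icc m b, f (j + 1) := by
  rw [← Finset.map_add_right_Icc m b 1, Finset.sum_map]
  rfl

lemma L_succ_alt (hn : 1 ≤ n) (i : ℕ) :
    L n y (i + 1) = ∑ j ∈ Icc i (n - 1), P y (i + 1) j + P y (i + 1) n * A y i := by
  rw [L]
  have h1 : i + 1 - 1 = i := by omega
  rw [h1]
  congr 1
  have h2 : n = (n - 1) + 1 := by omega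
  rw [h2, sum_shift]
  refine Finset.sum_congr rfl fun j hj => ?_
  rw [Finset.Ico_add_one_right_eq_Icc]
  rfl

lemma P_split {a e j : ℕ} (h1 : a ≤ e + 1) (h2 : e ≤ j) :
    P y a j = P y a e * P y (e + 1) j := by
  rw [P, P, P, ← Finset.Ico_add_one_right_eq_Icc, ← Finset.Ico_add_one_right_eq_Icc, ← Finset.Ico_add_one_right_eq_Icc,
    Finset.prod_Ico_consecutive _ h1 (by omega)]

lemma P_diag (a : ℕ) : P y a a = Yc y a := by simp [P]

lemma P_empty {a b : ℕ} (h : b < a) : P y a b = 1 := by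
  rw [P, Icc_eq_empty (by omega), Finset.prod_empty]

lemma Ngen (hn : 1 ≤ n) {a e : ℕ} (hae : a ≤ e + 1) (he : e ≤ n) :
    ∑ j ∈ Icc e (n - 1), P y a j + P y a n * A y e = P y a e * L n y (e + 1) := by
  rw [L_succ_alt n y hn, mul_add, Finset.mul_sum]
  congr 1
  · refine Finset.sum_congr rfl fun j hj => ?_
    have hj' : e ≤ j := (mem_Icc.1 hj).1
    rw [P_split y hae hj']
  · rw [← mul_assoc, ← P_split y hae he]


lemma L_top : L n y (n + 1) = A y n := by
  rw [L, P, Icc_eq_empty (Nat.not_succ_le_self n)]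
  simp

lemma L_rec (hn : 1 ≤ n) {i : ℕ} (h1 : 1 ≤ i) (h2 : i ≤ n) :
    L n y i = (1 - P y 1 n) + Yc y i * L n y (i + 1) := by
  obtain ⟨m, rfl⟩ : ∃ m, i = m + 1 := ⟨i - 1, by omega⟩
  have hmn : m ≤ n - 1 := by omega
  have hsplit : Icc m (n - 1) = insert m (Icc (m + 1) (n - 1)) := by
    ext x; simp only [mem_Icc, Finset.mem_insert]; omega
  have hI : L n y (m + 1) =
      1 + (∑ j ∈ Icc (m + 1) (n - 1), P y (m + 1) j + P y (m + 1) n * A y m) := by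
    rw [L_succ_alt n y hn, hsplit, Finset.sum_insert (by simp [mem_Icc]),
      P_empty y (Nat.lt_succ_self m)]
    ring
  have hN := Ngen n y hn (a := m + 1) (e := m + 1) (by omega) (by omega)
  have hA := A_succ y m
  have hP : P y 1 n = P y 1 m * P y (m + 1) n := P_split y (by omega) (by omega)
  rw [hI, hP, P_diag] at *
  rw [hA] at hN
  linear_combination hN
lemma L_unroll (hn : 1 ≤ n) {j : ℕ} (hj : j ≤ n) :
    L n y 1 = (1 - P y 1 n) * A y j + P y 1 j * L n y (j + 1) := by
  induction j with
  | zero => rw [A_zero, P_empty y Nat.zero_lt_one]; ring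
  | succ j ih =>
      have hj' : j ≤ n := by omega
      have hrec := L_rec n y hn (i := j + 1) (by omega) hj
      have hPs : P y 1 (j + 1) = P y 1 j * Yc y (j + 1) := by
        rw [P_split y (a := 1) (e := j) (by omega) (Nat.le_succ j), P_diag]
      rw [A_succ, hPs]
      linear_combination (ih hj') + P y 1 j * hrec
lemma L_one_eq (hn : 1 ≤ n) : L n y 1 = A y n := by
  have h := L_unroll n y hn (j := n) le_rfl
  rw [L_top] at h
  linear_combination h
lemma L_n_eq (hn : 1 ≤ n) : L n y n = 1 + Yc y n * A y (n - 1) := by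
  rw [L, Icc_self, Finset.sum_singleton, Ico_self, Finset.prod_empty, P_diag]
lemma L1_split (hn : 1 ≤ n) : L n y 1 = 1 + ∑ j ∈ Icc 1 (n - 1), P y 1 j := by
  have h := L_succ_alt n y hn 0
  rw [A_zero, mul_zero, add_zero] at h
  have hsplit : Icc 0 (n - 1) = insert 0 (Icc 1 (n - 1)) := by
    ext x; simp only [mem_Icc, Finset.mem_insert]; omega
  rw [hsplit, Finset.sum_insert (by simp [mem_Icc]), P_empty y Nat.zero_lt_one] at h
  exact h

section pos
variable (hn : 2 ≤ n) (hy : ∀ i, 1 ≤ i → i ≤ n → 0 < y i)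
include hn hy

omit hn in lemma Yc_pos {k : ℕ} (hk : k ≤ n) : 0 < Yc y k := by
  rcases Nat.eq_zero_or_pos k with h | h
  · simp [h, Yc]
  · rw [Yc_of_pos y h]; exact hy k h hk

omit hn in lemma P_pos {a b : ℕ} (hb : b ≤ n) : 0 < P y a b := by
  refine Finset.prod_pos fun k hk => ?_
  exact Yc_pos n y hy (le_trans (mem_Icc.1 hk).2 hb)

omit hn in lemma A_nonneg (i : ℕ) (hi : i ≤ n + 1) : 0 ≤ A y i := by
  refine Finset.sum_nonneg fun j hj => Finset.prod_nonneg fun k hk => ?_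
  have hk' : k ≤ n := by
    simp only [mem_range] at hj hk; omega
  exact le_of_lt (Yc_pos n y hy hk')

omit hn in lemma A_ge_one {i : ℕ} (h1 : 1 ≤ i) (hi : i ≤ n + 1) : 1 ≤ A y i := by
  obtain ⟨m, rfl⟩ : ∃ m, i = m + 1 := ⟨i - 1, by omega⟩
  rw [A, Finset.sum_range_succ']
  have h0 : ∏ k ∈ range (0 + 1), Yc y k = 1 := by simp [Yc]
  rw [h0]
  have : 0 ≤ ∑ j ∈ range m, ∏ k ∈ range (j + 1 + 1), Yc y k := by
    refine Finset.sum_nonneg fun j hj => Finset.prod_nonneg fun k hk => ?_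
    have hk' : k ≤ n := by simp only [mem_range] at hj hk; omega
    exact le_of_lt (Yc_pos n y hy hk')
  linarith

omit hn in lemma A_pos {i : ℕ} (h1 : 1 ≤ i) (hi : i ≤ n + 1) : 0 < A y i :=
  lt_of_lt_of_le one_pos (A_ge_one n y hy h1 hi)

lemma L_pos {i : ℕ} (h1 : 1 ≤ i) (hi : i ≤ n + 1) : 0 < L n y i := by
  rcases Nat.lt_or_ge i (n + 1) with h | h
  · have hsum : 0 < ∑ j ∈ Icc i n, ∏ k ∈ Ico i j, Yc y k := by
      refine Finset.sum_pos (fun j hj => Finset.prod_pos fun k hk => ?_) ?_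
      · have hk' : k ≤ n := by
          simp only [mem_Icc] at hj; simp only [mem_Ico] at hk; omega
        exact Yc_pos n y hy hk'
      · exact ⟨i, by simp only [mem_Icc]; omega⟩
    have h2 : 0 ≤ P y i n * A y (i - 1) :=
      mul_nonneg (le_of_lt (P_pos n y hy le_rfl)) (A_nonneg n y hy _ (by omega))
    rw [L]; linarith
  · have hi' : i = n + 1 := by omega
    subst hi'
    rw [L]
    have h1 : Icc (n + 1) n = ∅ := Icc_eq_empty (Nat.not_succ_le_self n)
    rw [h1]
    simp only [Finset.sum_empty, Finset.prod_empty, P]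
    rw [h1]
    simp only [Finset.prod_empty, one_mul, zero_add]
    have : n + 1 - 1 = n := by omega
    rw [this]
    exact A_pos n y hy (by omega) (by omega)

lemma Ymap_mid {i : ℕ} (h1 : 1 ≤ i) (h2 : i ≤ n - 1) :
    Ymap n y i = L n y i / (Yc y (i + 1) * L n y (i + 2)) := by
  have hne : i ≠ n := by omega
  have hN := Ngen n y (by omega : 1 ≤ n) (a := i + 1) (e := i + 1) (by omega) (by omega)
  rw [P_diag] at hN
  have hden : ∑ j ∈ Icc (i + 1) (n - 1), ∏ k ∈ Icc (i + 1) j, Yc y k +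
      (∏ k ∈ Icc (i + 1) n, Yc y k) * ∑ j ∈ range (i + 1), ∏ k ∈ range (j + 1), Yc y k
      = Yc y (i + 1) * L n y (i + 2) := by
    simp only [P, A] at hN
    convert hN using 2
  simp only [Ymap, if_neg hne]
  rw [hden]
  rfl

lemma Ymap_top : Ymap n y n = L n y n / (Yc y 1 * L n y 2) := by
  have h1 := L1_split n y (by omega)
  have h2 := L_rec n y (by omega) (i := 1) le_rfl (by omega)
  have hden : ∑ j ∈ Icc 1 (n - 1), ∏ k ∈ Icc 1 j, Yc y k + ∏ k ∈ Icc 1 n, Yc y k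
      = Yc y 1 * L n y 2 := by
    have : ∑ j ∈ Icc 1 (n - 1), P y 1 j + P y 1 n = Yc y 1 * L n y 2 := by
      norm_num at h2
      linear_combination h2 - h1
    simpa only [P] using this
  have hnum : (1 : ℝ) + Yc y n * ∑ j ∈ range (n - 1), ∏ k ∈ range (j + 1), Yc y k
      = L n y n := by
    rw [L_n_eq n y (by omega)]; rfl
  simp only [Ymap]
  rw [if_true, hden, hnum]

lemma Ymap_pos {k : ℕ} (h1 : 1 ≤ k) (h2 : k ≤ n) : 0 < Ymap n y k := by
  rcases eq_or_lt_of_le h2 with h | h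
  · rw [h, Ymap_top n y hn hy]
    exact div_pos (L_pos n y hn hy (by omega) (by omega))
      (mul_pos (Yc_pos n y hy (by omega)) (L_pos n y hn hy (by omega) (by omega)))
  · rw [Ymap_mid n y hn hy h1 (by omega)]
    exact div_pos (L_pos n y hn hy h1 (by omega))
      (mul_pos (Yc_pos n y hy (by omega)) (L_pos n y hn hy (by omega) (by omega)))

lemma YcY {k : ℕ} (hk : 1 ≤ k) : Yc (Ymap n y) k = Ymap n y k :=
  Yc_of_pos _ hk

lemma prodY {d j : ℕ} (hdj : d ≤ j) (hj : j ≤ n - 1) :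
    ∏ k ∈ Icc (d + 1) j, Yc (Ymap n y) k
      = L n y (d + 1) * L n y (d + 2) /
        (P y (d + 2) (j + 1) * (L n y (j + 1) * L n y (j + 2))) := by
  revert hj
  induction j, hdj using Nat.le_induction with
  | base =>
      intro hj
      rw [Icc_eq_empty (by omega : ¬ d + 1 ≤ d), Finset.prod_empty,
        P_empty y (by omega : d + 1 < d + 2), one_mul]
      exact (div_self (ne_of_gt (mul_pos (L_pos n y hn hy (by omega) (by omega))
        (L_pos n y hn hy (by omega) (by omega))))).symm
  | succ j hdj ih =>
      intro hj
      have hj' : j ≤ n - 1 := by omega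
      rw [Finset.prod_Icc_succ_top (by omega : d + 1 ≤ j + 1), ih hj',
        YcY n y hn hy (by omega), Ymap_mid n y hn hy (by omega) hj]
      have hsplit : P y (d + 2) (j + 2) = P y (d + 2) (j + 1) * Yc y (j + 2) := by
        rw [P_split y (a := d + 2) (e := j + 1) (by omega) (by omega), P_diag]
      rw [hsplit]
      have n1 : L n y (j + 1) ≠ 0 := ne_of_gt (L_pos n y hn hy (by omega) (by omega))
      have n2 : L n y (j + 2) ≠ 0 := ne_of_gt (L_pos n y hn hy (by omega) (by omega))
      have n3 : L n y (j + 3) ≠ 0 := ne_of_gt (L_pos n y hn hy (by omega) (by omega))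
      have n4 : Yc y (j + 2) ≠ 0 := ne_of_gt (Yc_pos n y hy (by omega))
      have n5 : P y (d + 2) (j + 1) ≠ 0 := ne_of_gt (P_pos n y hy (by omega))
      field_simp

lemma prodY_top {d : ℕ} (hd : d ≤ n - 1) :
    ∏ k ∈ Icc (d + 1) n, Yc (Ymap n y) k
      = L n y (d + 1) * L n y (d + 2) /
        (P y (d + 2) n * (L n y 1 * (Yc y 1 * L n y 2))) := by
  have hstep := Finset.prod_Icc_succ_top (a := d + 1) (b := n - 1)
    (by omega : d + 1 ≤ (n - 1) + 1) (Yc (Ymap n y))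
  rw [show (n - 1) + 1 = n from by omega] at hstep
  rw [hstep, prodY n y hn hy (le_refl d |>.trans hd) le_rfl,
    show (n - 1) + 1 = n from by omega, show (n - 1) + 2 = n + 1 from by omega,
    L_top, ← L_one_eq n y (by omega), YcY n y hn hy (by omega),
    Ymap_top n y hn hy]
  have n1 : L n y 1 ≠ 0 := ne_of_gt (L_pos n y hn hy (by omega) (by omega))
  have n2 : L n y 2 ≠ 0 := ne_of_gt (L_pos n y hn hy (by omega) (by omega))
  have n3 : L n y n ≠ 0 := ne_of_gt (L_pos n y hn hy (by omega) (by omega))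
  have n4 : Yc y 1 ≠ 0 := ne_of_gt (Yc_pos n y hy (by omega))
  have n5 : P y (d + 2) n ≠ 0 := ne_of_gt (P_pos n y hy le_rfl)
  field_simp

lemma AY_closed {e : ℕ} (h1 : 1 ≤ e) (he : e ≤ n - 1) :
    A (Ymap n y) e = L n y 2 * A y e / (P y 2 e * L n y (e + 1)) := by
  revert he
  induction e, h1 using Nat.le_induction with
  | base =>
      intro he
      rw [A_one, A_one, P_empty y (by omega : 1 < 2), one_mul, mul_one]
      exact (div_self (ne_of_gt (L_pos n y hn hy (by omega) (by omega)))).symm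
  | succ e h1 ih =>
      intro he
      have ih' := ih (by omega)
      have hPY : P (Ymap n y) 1 e
          = L n y 1 * L n y 2 / (P y 2 (e + 1) * (L n y (e + 1) * L n y (e + 2))) := by
        have h := prodY n y hn hy (d := 0) (j := e) (by omega) (by omega)
        norm_num at h
        simpa [P] using h
      have hu := L_unroll n y (by omega) (j := e) (by omega)
      have hr := L_rec n y (by omega) (i := e + 1) (by omega) (by omega)
      rw [show e + 1 + 1 = e + 2 from rfl] at hr
      have key : A y e * (Yc y (e + 1) * L n y (e + 2)) + L n y 1
          = A y (e + 1) * L n y (e + 1) := by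
        rw [A_succ y e]
        linear_combination hu - A y e * hr
      have hsplit : P y 2 (e + 1) = P y 2 e * Yc y (e + 1) := by
        rw [P_split y (a := 2) (e := e) (by omega) (by omega), P_diag]
      rw [A_succ (Ymap n y) e, ih', hPY, hsplit]
      have n1 : L n y (e + 1) ≠ 0 := ne_of_gt (L_pos n y hn hy (by omega) (by omega))
      have n2 : L n y (e + 2) ≠ 0 := ne_of_gt (L_pos n y hn hy (by omega) (by omega))
      have n3 : P y 2 e ≠ 0 := ne_of_gt (P_pos n y hy (by omega))
      have n4 : Yc y (e + 1) ≠ 0 := ne_of_gt (Yc_pos n y hy (by omega))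
      field_simp
      linear_combination (L n y 2) * key

lemma PY_seg {d j : ℕ} (hdj : d ≤ j) (hj : j ≤ n - 1) :
    P (Ymap n y) (d + 1) j = L n y (d + 1) * L n y (d + 2) /
      (P y (d + 2) (j + 1) * (L n y (j + 1) * L n y (j + 2))) := by
  simpa [P] using prodY n y hn hy hdj hj

lemma PY_topc {d : ℕ} (hd : d ≤ n - 1) :
    P (Ymap n y) (d + 1) n = L n y (d + 1) * L n y (d + 2) /
      (P y (d + 2) n * (L n y 1 * (Yc y 1 * L n y 2))) := by
  simpa [P] using prodY_top n y hn hy hd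

lemma PY_one {e : ℕ} (he : e ≤ n - 1) :
    P (Ymap n y) 1 e = Yc y 1 * (L n y 1 * L n y 2) /
      (P y 1 (e + 1) * (L n y (e + 1) * L n y (e + 2))) := by
  have h := PY_seg n y hn hy (d := 0) (j := e) (by omega) he
  norm_num at h
  rw [h]
  have hs : P y 1 (e + 1) = Yc y 1 * P y 2 (e + 1) := by
    rw [P_split y (a := 1) (e := 1) (by omega) (by omega), P_diag]
  rw [hs]
  have n0 : Yc y 1 ≠ 0 := ne_of_gt (Yc_pos n y hy (by omega))
  have n1 : L n y (e + 1) ≠ 0 := ne_of_gt (L_pos n y hn hy (by omega) (by omega))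
  have n2 : L n y (e + 2) ≠ 0 := ne_of_gt (L_pos n y hn hy (by omega) (by omega))
  have n3 : P y 2 (e + 1) ≠ 0 := ne_of_gt (P_pos n y hy (by omega))
  field_simp

lemma S_closed {d e : ℕ} (hd1 : 1 ≤ d) (hde : d ≤ e) (he : e ≤ n - 1) :
    ∑ j ∈ Icc e (n - 1), P (Ymap n y) (d + 1) j
      + P (Ymap n y) (d + 1) n * A (Ymap n y) e
    = L n y (d + 1) * L n y (d + 2) /
        (P y 1 e * (P y (d + 2) n * L n y (e + 1))) := by
  have main : ∀ t e₀, d ≤ e₀ → e₀ ≤ n - 1 → n - 1 - e₀ = t →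
      ∑ j ∈ Icc e₀ (n - 1), P (Ymap n y) (d + 1) j
        + P (Ymap n y) (d + 1) n * A (Ymap n y) e₀
      = L n y (d + 1) * L n y (d + 2) /
          (P y 1 e₀ * (P y (d + 2) n * L n y (e₀ + 1))) := by
    intro t
    induction t with
    | zero =>
        intro e₀ hde₀ he₀ ht
        obtain rfl : e₀ = n - 1 := by omega
        rw [Icc_self, Finset.sum_singleton, PY_seg n y hn hy hde₀ le_rfl,
          PY_topc n y hn hy hde₀, AY_closed n y hn hy (by omega) le_rfl,
          show n - 1 + 1 = n from by omega, show n - 1 + 2 = n + 1 from by omega,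
          L_top, ← L_one_eq n y (by omega)]
        have hL1 : L n y 1 = A y (n - 1) + P y 1 (n - 1) := by
          rw [L_one_eq n y (by omega)]
          have h := A_succ y (n - 1)
          rw [show n - 1 + 1 = n from by omega] at h
          exact h
        have hs1 : P y 1 (n - 1) = Yc y 1 * P y 2 (n - 1) := by
          rw [P_split y (a := 1) (e := 1) (by omega) (by omega : 1 ≤ n - 1), P_diag]
        rw [hs1] at hL1 ⊢
        have n1 : L n y 1 ≠ 0 := ne_of_gt (L_pos n y hn hy (by omega) (by omega))
        have n2 : L n y 2 ≠ 0 := ne_of_gt (L_pos n y hn hy (by omega) (by omega))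
        have n3 : L n y n ≠ 0 := ne_of_gt (L_pos n y hn hy (by omega) (by omega))
        have n4 : Yc y 1 ≠ 0 := ne_of_gt (Yc_pos n y hy (by omega))
        have n5 : P y 2 (n - 1) ≠ 0 := ne_of_gt (P_pos n y hy (by omega))
        have n6 : P y (d + 2) n ≠ 0 := ne_of_gt (P_pos n y hy le_rfl)
        field_simp
        linear_combination (-(L n y (d + 1) * L n y (d + 2))) * hL1
    | succ t ih =>
        intro e₀ hde₀ he₀ ht
        have he1 : e₀ + 1 ≤ n - 1 := by omega
        have hS := ih (e₀ + 1) (by omega) he1 (by omega)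
        have hA := A_succ (Ymap n y) e₀
        have hsplitI : Icc e₀ (n - 1) = insert e₀ (Icc (e₀ + 1) (n - 1)) := by
          ext x; simp only [mem_Icc, Finset.mem_insert]; omega
        rw [hsplitI, Finset.sum_insert (by simp [mem_Icc])]
        rw [hA, mul_add, PY_topc n y hn hy (by omega), PY_one n y hn hy (by omega : e₀ ≤ n - 1)] at hS
        rw [PY_seg n y hn hy hde₀ (by omega), PY_topc n y hn hy (by omega)]
        have hstar : L n y (d + 1) * L n y (d + 2) /
              (P y 1 e₀ * (P y (d + 2) n * L n y (e₀ + 1)))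
            = L n y (d + 1) * L n y (d + 2) /
                (P y 1 (e₀ + 1) * (P y (d + 2) n * L n y (e₀ + 1 + 1)))
              + L n y (d + 1) * L n y (d + 2) /
                  (P y (d + 2) (e₀ + 1) * (L n y (e₀ + 1) * L n y (e₀ + 2)))
              - L n y (d + 1) * L n y (d + 2) /
                    (P y (d + 2) n * (L n y 1 * (Yc y 1 * L n y 2)))
                  * (Yc y 1 * (L n y 1 * L n y 2) /
                    (P y 1 (e₀ + 1) * (L n y (e₀ + 1) * L n y (e₀ + 2)))) := by
          have hrec := L_rec n y (by omega) (i := e₀ + 1) (by omega) (by omega)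
          rw [show e₀ + 1 + 1 = e₀ + 2 from rfl] at hrec ⊢
          have h2 : P y (d + 2) n = P y (d + 2) (e₀ + 1) * P y (e₀ + 2) n :=
            P_split y (by omega) (by omega)
          have hQ : P y 1 n = P y 1 (e₀ + 1) * P y (e₀ + 2) n :=
            P_split y (by omega) (by omega)
          have h1 : P y 1 (e₀ + 1) = P y 1 e₀ * Yc y (e₀ + 1) := by
            rw [P_split y (a := 1) (e := e₀) (by omega) (by omega), P_diag]
          rw [hQ, h1] at hrec
          rw [h2, h1]
          have n1 : L n y 1 ≠ 0 := ne_of_gt (L_pos n y hn hy (by omega) (by omega))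
          have n2 : L n y 2 ≠ 0 := ne_of_gt (L_pos n y hn hy (by omega) (by omega))
          have n3 : L n y (e₀ + 1) ≠ 0 := ne_of_gt (L_pos n y hn hy (by omega) (by omega))
          have n4 : L n y (e₀ + 2) ≠ 0 := ne_of_gt (L_pos n y hn hy (by omega) (by omega))
          have n5 : Yc y 1 ≠ 0 := ne_of_gt (Yc_pos n y hy (by omega))
          have n6 : Yc y (e₀ + 1) ≠ 0 := ne_of_gt (Yc_pos n y hy (by omega))
          have n7 : P y 1 e₀ ≠ 0 := ne_of_gt (P_pos n y hy (by omega))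
          have n8 : P y (d + 2) (e₀ + 1) ≠ 0 := ne_of_gt (P_pos n y hy (by omega))
          have n9 : P y (e₀ + 2) n ≠ 0 := ne_of_gt (P_pos n y hy le_rfl)
          field_simp
          linear_combination (-(L n y (d + 1) * L n y (d + 2))) * hrec
        linear_combination hS - hstar
  exact main (n - 1 - e) e hde he rfl

end pos

end SW

/-- for all `1 ≤ d ≤ e ≤ n−1` and positive `y`,
`F_{d,e}(Y(y)) · F_{d,e}(y) = 1`. -/
theorem Fde_mul_eq_one (n : ℕ) (hn : 2 ≤ n) (y : ℕ → ℝ)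
    (hy : ∀ i, 1 ≤ i → i ≤ n → 0 < y i) :
    ∀ d e : ℕ, 1 ≤ d → d ≤ e → e ≤ n - 1 →
      Fde n d e (Ymap n y) * Fde n d e y = 1 := by
  intro d e hd hde he
  have hn1 : 1 ≤ n := by omega
  -- closed form for Fde n d e y
  have hnum_y := SW.Ngen n y hn1 (a := d + 1) (e := e) (by omega) (by omega)
  simp only [SW.P, SW.A] at hnum_y
  have hFy : Fde n d e y = SW.P y (d + 1) e * SW.L n y (e + 1) / SW.L n y (d + 1) := by
    simp only [Fde]
    rw [hnum_y]
    rfl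
  -- closed form for Fde n d e (Ymap n y)
  have hSe := SW.S_closed n y hn hy hd hde he
  have hSd := SW.S_closed n y hn hy hd (le_refl d) (by omega)
  have hLYd : SW.L n (Ymap n y) (d + 1)
      = SW.L n y (d + 1) * SW.L n y (d + 2) /
          (SW.P y 1 d * (SW.P y (d + 2) n * SW.L n y (d + 1))) := by
    rw [SW.L_succ_alt n (Ymap n y) hn1 d]
    exact hSd
  simp only [SW.P, SW.A] at hSe hLYd
  have hFY : Fde n d e (Ymap n y)
      = (SW.L n y (d + 1) * SW.L n y (d + 2) /
          (SW.P y 1 e * (SW.P y (d + 2) n * SW.L n y (e + 1)))) /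
        (SW.L n y (d + 1) * SW.L n y (d + 2) /
          (SW.P y 1 d * (SW.P y (d + 2) n * SW.L n y (d + 1)))) := by
    simp only [Fde]
    rw [hSe]
    have hden : (∑ j ∈ Finset.Icc (d + 1) n, ∏ k ∈ Finset.Ico (d + 1) j, Yc (Ymap n y) k +
        (∏ k ∈ Finset.Icc (d + 1) n, Yc (Ymap n y) k) *
          ∑ j ∈ Finset.range d, ∏ k ∈ Finset.range (j + 1), Yc (Ymap n y) k)
        = SW.L n (Ymap n y) (d + 1) := rfl
    rw [hden, hLYd]
    simp only [SW.P]
  rw [hFY, hFy]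
  have hsplit : SW.P y 1 e = SW.P y 1 d * SW.P y (d + 1) e :=
    SW.P_split y (by omega) hde
  have n1 : SW.L n y (d + 1) ≠ 0 := ne_of_gt (SW.L_pos n y hn hy (by omega) (by omega))
  have n2 : SW.L n y (d + 2) ≠ 0 := ne_of_gt (SW.L_pos n y hn hy (by omega) (by omega))
  have n3 : SW.L n y (e + 1) ≠ 0 := ne_of_gt (SW.L_pos n y hn hy (by omega) (by omega))
  have n4 : SW.P y 1 d ≠ 0 := ne_of_gt (SW.P_pos n y hy (by omega))
  have n5 : SW.P y (d + 1) e ≠ 0 := ne_of_gt (SW.P_pos n y hy (by omega))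
  have n6 : SW.P y (d + 2) n ≠ 0 := ne_of_gt (SW.P_pos n y hy le_rfl)
  rw [hsplit]
  field_simp
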